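/- Let A be an m×n real matrix with no zero rows, and define F = Σ_{j=1}^m (2/‖A_j‖²) R_m ⋯ R_{j+1} A_j e_j^T (an n×m matrix, where the product of reflections is empty, i.e. the identity, for j=m). Then F A = I_n - R_A, where R_A = R_m ⋯ R_1 and R_i = I_n - 2 A_i A_i^T/‖A_i‖². -/

import Mathlib

open Matrix

/-- The Householder reflection determined by a (nonzero) vector `a`. -/
noncomputable def reflOf {n : ℕ} (a : Fin n → ℝ) : Matrix (Fin n) (Fin n) ℝ :=
  1 - (2 / (∑ j, a j ^ 2)) • Matrix.vecMulVec a a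

/-- The product `R_m ⋯ R_2 R_1` of the Householder reflections of the rows of `A`. -/
noncomputable def reflProd {m n : ℕ} (A : Matrix (Fin m) (Fin n) ℝ) :
    Matrix (Fin n) (Fin n) ℝ :=
  (((List.finRange m).map (fun i => reflOf (A i))).reverse).prod

/-- The product `R_m ⋯ R_{j+1}` of the reflections of the rows of `A` of index
greater than `j` (the identity matrix when `j = m`). -/
noncomputable def reflTailProd {m n : ℕ} (A : Matrix (Fin m) (Fin n) ℝ) (j : Fin m) :
    Matrix (Fin n) (Fin n) ℝ :=
  ((((List.finRange m).filter (fun i => j < i)).map (fun i => reflOf (A i))).reverse).prod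

/-- The matrix `F = Σ_j (2/‖A_j‖²) R_m ⋯ R_{j+1} A_j e_jᵀ`. -/
noncomputable def Fmat {m n : ℕ} (A : Matrix (Fin m) (Fin n) ℝ) :
    Matrix (Fin n) (Fin m) ℝ :=
  ∑ j : Fin m, (2 / (∑ k, A j k ^ 2)) •
    (reflTailProd A j * Matrix.vecMulVec (A j) (Pi.single j 1))

/-- Auxiliary: filtering `finRange` by `k ≤ ·` peels off the head `k`. -/
lemma filt_cons : ∀ (m k : ℕ) (hk : k < m),
    (List.finRange m).filter (fun (i : Fin m) => decide (k ≤ (i : ℕ)))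
      = (⟨k, hk⟩ : Fin m) :: (List.finRange m).filter (fun (i : Fin m) => decide (k + 1 ≤ (i : ℕ))) := by
  intro m
  induction m with
  | zero => intro k hk; omega
  | succ m ih =>
    intro k hk
    cases k with
    | zero =>
      simp [List.finRange_succ, List.filter_map, Function.comp_def, Fin.ext_iff,
        List.filter_eq_self]
    | succ k =>
      have hk' : k < m := Nat.lt_of_succ_lt_succ hk
      have h1 : ∀ i : Fin m, decide (k + 1 ≤ (i : ℕ) + 1) = decide (k ≤ (i : ℕ)) := by
        intro i; simp [Nat.succ_le_succ_iff]
      have h2 : ∀ i : Fin m, decide (k + 1 + 1 ≤ (i : ℕ) + 1) = decide (k + 1 ≤ (i : ℕ)) := by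
        intro i; simp [Nat.succ_le_succ_iff]
      simp only [List.finRange_succ, List.filter_cons, List.filter_map, Function.comp_def,
        Fin.val_succ, Fin.val_zero]
      rw [List.filter_congr (fun a _ => h1 a), List.filter_congr (fun a _ => h2 a), ih k hk']
      simp [Fin.ext_iff, Nat.le_zero]

/-- Auxiliary tail product indexed by a natural number. -/
noncomputable def gAux {m n : ℕ} (A : Matrix (Fin m) (Fin n) ℝ) (k : ℕ) :
    Matrix (Fin n) (Fin n) ℝ :=
  ((((List.finRange m).filter (fun (i : Fin m) => decide (k ≤ (i : ℕ)))).map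
    (fun i => reflOf (A i))).reverse).prod

lemma gAux_zero {m n : ℕ} (A : Matrix (Fin m) (Fin n) ℝ) : gAux A 0 = reflProd A := by
  simp [gAux, reflProd]

lemma gAux_top {m n : ℕ} (A : Matrix (Fin m) (Fin n) ℝ) : gAux A m = 1 := by
  have : (List.finRange m).filter (fun (i : Fin m) => decide (m ≤ (i : ℕ))) = [] := by
    rw [List.filter_eq_nil_iff]
    intro a _; simp [Nat.not_le.mpr a.is_lt]
  simp [gAux, this]

lemma gAux_succ {m n : ℕ} (A : Matrix (Fin m) (Fin n) ℝ) (k : ℕ) (hk : k < m) :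
    gAux A k = gAux A (k + 1) * reflOf (A ⟨k, hk⟩) := by
  unfold gAux
  rw [filt_cons m k hk]
  simp

lemma reflTailProd_eq {m n : ℕ} (A : Matrix (Fin m) (Fin n) ℝ) (j : Fin m) :
    reflTailProd A j = gAux A ((j : ℕ) + 1) := by
  unfold reflTailProd gAux
  have h : (fun (i : Fin m) => decide (j < i)) = (fun (i : Fin m) => decide ((j : ℕ) + 1 ≤ (i : ℕ))) := by
    funext i; simp only [Fin.lt_def, Nat.lt_iff_add_one_le]
  rw [h]

/-- `F A = I - R_A`. -/
theorem Fmat_mul_eq (m n : ℕ) (A : Matrix (Fin m) (Fin n) ℝ) (hA : ∀ i, A i ≠ 0) :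
    Fmat A * A = 1 - reflProd A := by
  have key : ∀ j : Fin m,
      (2 / (∑ k, A j k ^ 2)) •
        (reflTailProd A j * Matrix.vecMulVec (A j) (Pi.single j 1)) * A
      = gAux A ((j : ℕ) + 1) - gAux A (j : ℕ) := by
    intro j
    have hvv : Matrix.vecMulVec (A j) (Pi.single j 1) * A
        = Matrix.vecMulVec (A j) (A j) := by
      ext i k
      simp [Matrix.mul_apply, Matrix.vecMulVec_apply, Pi.single_apply, mul_assoc,
        ite_mul, mul_ite]
    have hrefl : reflTailProd A j * ((2 / (∑ k, A j k ^ 2)) •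
        Matrix.vecMulVec (A j) (A j)) = reflTailProd A j * (1 - reflOf (A j)) := by
      congr 1
      simp [reflOf, sub_sub_cancel]
    rw [Matrix.smul_mul, Matrix.mul_assoc, hvv, ← Matrix.mul_smul, hrefl, mul_sub, mul_one,
      reflTailProd_eq]
    congr 1
    rw [gAux_succ A (j : ℕ) j.is_lt]
  rw [Fmat, Matrix.sum_mul]
  simp only [key]
  rw [Fin.sum_univ_eq_sum_range (fun j => gAux A (j + 1) - gAux A j)]
  rw [Finset.sum_range_sub (gAux A), gAux_top, gAux_zero]
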